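/- arXiv:2409.09255 — 2 statements merged into one kernel-verified Lean document; each statement's English description precedes it below -/
import Mathlib

section
/- Let ℓ⃗ = (ℓ_μ ≥ ⋯ ≥ ℓ_1) and ℓ⃗' = (ℓ'_{μ'} ≥ ⋯ ≥ ℓ'_1) be partitions of the same integer ℓ ≥ 1 into odd positive parts. Define q_{ℓ⃗}(t) ∈ ℂ[t] by (t+1) · q_{ℓ⃗}(t) = ( ∏_{ν=1}^{μ} (t^{ℓ_ν} + 1) ) · ( ∏_{τ=1}^{μ} (t^{2ℓ_τ} - 1)^{(ℓ_τ-1)/2} ) · ( ∏_{1 ≤ ρ < σ ≤ μ} (t^{2·lcm(ℓ_ρ,ℓ_σ)} - 1)^{gcd(ℓ_ρ,ℓ_σ)} ), and similarly q_{ℓ⃗'} from ℓ⃗'. If q_{ℓ⃗} = q_{ℓ⃗'}, then μ = μ' and ℓ_ν = ℓ'_ν for all ν. -/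
open Polynomial

lemma pm_sub_ne (n : ℕ) (hn : 0 < n) : ((X : ℂ[X]) ^ n - 1) ≠ 0 := by
  have : ((X : ℂ[X]) ^ n - 1) = X ^ n - C 1 := by simp
  rw [this]; exact X_pow_sub_C_ne_zero hn 1

lemma pm_add_ne (n : ℕ) (hn : 0 < n) : ((X : ℂ[X]) ^ n + 1) ≠ 0 := by
  have : ((X : ℂ[X]) ^ n + 1) = X ^ n - C (-1) := by simp [sub_neg_eq_add]
  rw [this]; exact X_pow_sub_C_ne_zero hn _

lemma rm_pow (p : ℂ[X]) (hp : p ≠ 0) (k : ℕ) (z : ℂ) :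
    rootMultiplicity z (p ^ k) = k * rootMultiplicity z p := by
  induction k with
  | zero => simp [rootMultiplicity_eq_zero]
  | succ k ih =>
    rw [pow_succ, rootMultiplicity_mul (mul_ne_zero (pow_ne_zero _ hp) hp), ih]
    ring

lemma rm_sub_one (n : ℕ) (hn : 0 < n) (z : ℂ) :
    rootMultiplicity z ((X : ℂ[X]) ^ n - 1) = if z ^ n = 1 then 1 else 0 := by
  have hC : ((X : ℂ[X]) ^ n - 1) = X ^ n - C 1 := by simp
  have p0 : ((X : ℂ[X]) ^ n - 1) ≠ 0 := pm_sub_ne n hn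
  have hsf : Squarefree ((X : ℂ[X]) ^ n - 1) := by
    rw [hC]
    exact (separable_X_pow_sub_C 1 (by exact_mod_cast hn.ne') one_ne_zero).squarefree
  by_cases h : z ^ n = 1
  · rw [if_pos h]
    have h1 : 1 ≤ rootMultiplicity z ((X : ℂ[X]) ^ n - 1) := by
      rw [le_rootMultiplicity_iff p0, pow_one, dvd_iff_isRoot]
      simp [IsRoot, h]
    have h2 : rootMultiplicity z ((X : ℂ[X]) ^ n - 1) ≤ 1 := by
      rw [rootMultiplicity_le_iff p0]
      intro hdvd
      exact Polynomial.not_isUnit_X_sub_C z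
        (hsf (X - C z) (by rw [show (1:ℕ)+1 = 2 from rfl, sq] at hdvd; exact hdvd))
    omega
  · rw [if_neg h]
    exact rootMultiplicity_eq_zero (by simp [IsRoot, sub_eq_zero, h])

lemma rm_add_one (n : ℕ) (hn : 0 < n) (z : ℂ) :
    rootMultiplicity z ((X : ℂ[X]) ^ n + 1) = if z ^ n = -1 then 1 else 0 := by
  have hC : ((X : ℂ[X]) ^ n + 1) = X ^ n - C (-1) := by simp [sub_neg_eq_add]
  have p0 : ((X : ℂ[X]) ^ n + 1) ≠ 0 := pm_add_ne n hn
  have hsf : Squarefree ((X : ℂ[X]) ^ n + 1) := by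
    rw [hC]
    exact (separable_X_pow_sub_C (-1) (by exact_mod_cast hn.ne') (by norm_num)).squarefree
  by_cases h : z ^ n = -1
  · rw [if_pos h]
    have h1 : 1 ≤ rootMultiplicity z ((X : ℂ[X]) ^ n + 1) := by
      rw [le_rootMultiplicity_iff p0, pow_one, dvd_iff_isRoot]
      simp [IsRoot, h]
    have h2 : rootMultiplicity z ((X : ℂ[X]) ^ n + 1) ≤ 1 := by
      rw [rootMultiplicity_le_iff p0]
      intro hdvd
      exact Polynomial.not_isUnit_X_sub_C z
        (hsf (X - C z) (by rw [show (1:ℕ)+1 = 2 from rfl, sq] at hdvd; exact hdvd))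
    omega
  · rw [if_neg h]
    refine rootMultiplicity_eq_zero ?_
    simp only [IsRoot, eval_add, eval_pow, eval_X, eval_one]
    intro hc
    exact h (by linear_combination hc)

lemma rm_prod {ι : Type*} (s : Finset ι) (f : ι → ℂ[X]) (hf : ∀ i ∈ s, f i ≠ 0) (z : ℂ) :
    rootMultiplicity z (∏ i ∈ s, f i) = ∑ i ∈ s, rootMultiplicity z (f i) := by
  induction s using Finset.cons_induction with
  | empty => simp
  | cons a s ha ih =>
    rw [Finset.prod_cons, Finset.sum_cons,
      rootMultiplicity_mul (mul_ne_zero (hf a (Finset.mem_cons_self a s))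
        (Finset.prod_ne_zero_iff.2 fun i hi => hf i (Finset.mem_cons_of_mem hi))),
      ih fun i hi => hf i (Finset.mem_cons_of_mem hi)]

lemma key (μ : ℕ) (L : Fin μ → ℕ) (hpos : ∀ ν, 0 < L ν) (q : ℂ[X])
    (hq : (X + 1) * q =
      (∏ ν : Fin μ, ((X : ℂ[X]) ^ (L ν) + 1)) *
      (∏ τ : Fin μ, ((X : ℂ[X]) ^ (2 * L τ) - 1) ^ ((L τ - 1) / 2)) *
      ∏ p ∈ Finset.univ.filter (fun p : Fin μ × Fin μ => p.1 < p.2),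
        ((X : ℂ[X]) ^ (2 * Nat.lcm (L p.1) (L p.2)) - 1) ^ Nat.gcd (L p.1) (L p.2))
    (z : ℂ) :
    (if z = -1 then 1 else 0) + rootMultiplicity z q =
      (Finset.univ.filter (fun ν => z ^ (L ν) = -1)).card
      + (∑ τ : Fin μ, if z ^ (2 * L τ) = 1 then (L τ - 1) / 2 else 0)
      + ∑ p ∈ Finset.univ.filter (fun p : Fin μ × Fin μ => p.1 < p.2),
          (if z ^ (2 * Nat.lcm (L p.1) (L p.2)) = 1 then Nat.gcd (L p.1) (L p.2) else 0) := by
  have h1 : (∏ ν : Fin μ, ((X : ℂ[X]) ^ (L ν) + 1)) ≠ 0 :=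
    Finset.prod_ne_zero_iff.2 fun i _ => pm_add_ne _ (hpos i)
  have h2 : (∏ τ : Fin μ, ((X : ℂ[X]) ^ (2 * L τ) - 1) ^ ((L τ - 1) / 2)) ≠ 0 :=
    Finset.prod_ne_zero_iff.2 fun i _ => pow_ne_zero _ (pm_sub_ne _ (Nat.mul_pos two_pos (hpos i)))
  have h3 : (∏ p ∈ Finset.univ.filter (fun p : Fin μ × Fin μ => p.1 < p.2),
        ((X : ℂ[X]) ^ (2 * Nat.lcm (L p.1) (L p.2)) - 1) ^ Nat.gcd (L p.1) (L p.2)) ≠ 0 :=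
    Finset.prod_ne_zero_iff.2 fun i _ => pow_ne_zero _ (pm_sub_ne _
      (Nat.mul_pos two_pos (Nat.pos_of_ne_zero (Nat.lcm_ne_zero (hpos _).ne' (hpos _).ne'))))
  have hne : (X + 1 : ℂ[X]) * q ≠ 0 := by
    rw [hq]; exact mul_ne_zero (mul_ne_zero h1 h2) h3
  have := congrArg (rootMultiplicity z) hq
  rw [rootMultiplicity_mul hne,
    rootMultiplicity_mul (hq ▸ hne),
    rootMultiplicity_mul (mul_ne_zero h1 h2),
    rm_prod _ _ (fun i _ => pm_add_ne _ (hpos i)) z,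
    rm_prod _ _ (fun i _ => pow_ne_zero _ (pm_sub_ne _ (Nat.mul_pos two_pos (hpos i)))) z,
    rm_prod _ _ (fun i _ => pow_ne_zero _ (pm_sub_ne _
      (Nat.mul_pos two_pos (Nat.pos_of_ne_zero (Nat.lcm_ne_zero (hpos _).ne' (hpos _).ne'))))) z]
    at this
  have hX1 : rootMultiplicity z (X + 1 : ℂ[X]) = if z = -1 then 1 else 0 := by
    have := rm_add_one 1 one_pos z
    simpa using this
  rw [hX1] at this
  rw [this]
  congr 1
  congr 1
  · rw [Finset.card_filter]
    exact Finset.sum_congr rfl fun i _ => by rw [rm_add_one _ (hpos i)]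
  · refine Finset.sum_congr rfl fun i _ => ?_
    rw [rm_pow _ (pm_sub_ne _ (Nat.mul_pos two_pos (hpos i))),
      rm_sub_one _ (Nat.mul_pos two_pos (hpos i))]
    split <;> simp
  · refine Finset.sum_congr rfl fun i _ => ?_
    have hl : 0 < 2 * Nat.lcm (L i.1) (L i.2) :=
      Nat.mul_pos two_pos (Nat.pos_of_ne_zero (Nat.lcm_ne_zero (hpos _).ne' (hpos _).ne'))
    rw [rm_pow _ (pm_sub_ne _ hl), rm_sub_one _ hl]
    split <;> simp

section
variable {d : ℕ} {z : ℂ}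

lemma fact_b (hz : IsPrimitiveRoot z (2*d)) (a : ℕ) : z ^ (2*a) = 1 ↔ d ∣ a := by
  rw [hz.pow_eq_one_iff_dvd]
  exact Nat.mul_dvd_mul_iff_left two_pos

lemma fact_a (hz : IsPrimitiveRoot z (2*d)) (hd : Odd d) {m : ℕ} (hm : Odd m) :
    z ^ m = -1 ↔ d ∣ m := by
  constructor
  · intro h
    have h2 : z ^ (2*m) = 1 := by rw [two_mul, pow_add, h]; ring
    exact (fact_b hz m).1 h2
  · intro h
    have h2 : z ^ (2*m) = 1 := (fact_b hz m).2 h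
    have hsq : (z ^ m - 1) * (z ^ m + 1) = 0 := by
      have h3 : (z ^ m) ^ 2 = 1 := by rw [← pow_mul, mul_comm]; exact h2
      linear_combination h3
    rcases mul_eq_zero.1 hsq with h1 | h1
    · exfalso
      have h4 : z ^ m = 1 := by linear_combination h1
      have h5 : (2*d) ∣ m := (hz.pow_eq_one_iff_dvd m).1 h4
      have h6 : 2 ∣ m := dvd_trans (Dvd.intro d rfl) h5
      exact (Nat.not_even_iff_odd.2 hm) (even_iff_two_dvd.2 h6)
    · linear_combination h1

lemma fact_c (hz : IsPrimitiveRoot z (2*d)) (hd : Odd d) (a : ℕ) :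
    (z^2) ^ (2*a) = 1 ↔ d ∣ a := by
  rw [← pow_mul]
  have hrw : 2 * (2 * a) = 2 * 2 * a := by ring
  rw [hrw, hz.pow_eq_one_iff_dvd]
  constructor
  · intro h
    have hd2 : d ∣ 2 * a := (Nat.mul_dvd_mul_iff_left two_pos).1 (by
      have : 2 * (2 * a) = 2 * 2 * a := by ring
      rw [this]; exact h)
    exact Nat.Coprime.dvd_of_dvd_mul_left (hd.coprime_two_right) hd2
  · intro h
    obtain ⟨k, rfl⟩ := h
    exact ⟨2*k, by ring⟩

lemma fact_d (hz : IsPrimitiveRoot z (2*d)) (hd : Odd d) {m : ℕ} (hm : Odd m) :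
    (z^2) ^ m ≠ -1 := by
  intro h
  have h' : z ^ (2 * m) = -1 := by rw [pow_mul]; exact h
  have h4 : z ^ (2*(2*m)) = 1 := by rw [two_mul, pow_add, h']; ring
  have hdvd : d ∣ 2*m := (fact_b hz (2*m)).1 h4
  have hdm : d ∣ m := Nat.Coprime.dvd_of_dvd_mul_left (hd.coprime_two_right) hdvd
  have h1 : z ^ (2*m) = 1 := (fact_b hz m).2 hdm
  rw [h1] at h'
  norm_num at h'

lemma fact_e (hz : IsPrimitiveRoot z (2*d)) (hd3 : 3 ≤ d) : z ≠ -1 := by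
  intro h
  have : z ^ (2*1) = 1 := by rw [h]; ring
  have := (fact_b hz 1).1 this
  have := Nat.le_of_dvd one_pos this
  omega

lemma fact_f (hz : IsPrimitiveRoot z (2*d)) (hd : Odd d) (hd3 : 3 ≤ d) : z^2 ≠ -1 := by
  intro h
  have : (z^2) ^ (2*1) = 1 := by rw [h]; ring
  have := (fact_c hz hd 1).1 this
  have := Nat.le_of_dvd one_pos this
  omega

end

lemma keyd (μ : ℕ) (L : Fin μ → ℕ) (hpos : ∀ ν, 0 < L ν) (hodd : ∀ ν, Odd (L ν)) (q : ℂ[X])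
    (hq : (X + 1) * q =
      (∏ ν : Fin μ, ((X : ℂ[X]) ^ (L ν) + 1)) *
      (∏ τ : Fin μ, ((X : ℂ[X]) ^ (2 * L τ) - 1) ^ ((L τ - 1) / 2)) *
      ∏ p ∈ Finset.univ.filter (fun p : Fin μ × Fin μ => p.1 < p.2),
        ((X : ℂ[X]) ^ (2 * Nat.lcm (L p.1) (L p.2)) - 1) ^ Nat.gcd (L p.1) (L p.2))
    (d : ℕ) (hd : Odd d) (hd3 : 3 ≤ d) (z : ℂ) (hz : IsPrimitiveRoot z (2*d)) :
    rootMultiplicity z q =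
      (Finset.univ.filter (fun ν => d ∣ L ν)).card + rootMultiplicity (z^2) q := by
  have k1 := key μ L hpos q hq z
  have k2 := key μ L hpos q hq (z^2)
  rw [if_neg (fact_e hz hd3)] at k1
  rw [if_neg (fact_f hz hd hd3)] at k2
  rw [Finset.filter_congr (fun ν _ => fact_a hz hd (hodd ν)),
    Finset.sum_congr rfl (fun τ _ => if_congr (fact_b hz (L τ)) rfl rfl),
    Finset.sum_congr rfl (fun p _ => if_congr (fact_b hz _) rfl rfl)] at k1
  rw [Finset.filter_congr (fun ν _ => iff_of_false (fact_d hz hd (hodd ν)) not_false),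
    Finset.filter_false, Finset.card_empty,
    Finset.sum_congr rfl (fun τ _ => if_congr (fact_c hz hd (L τ)) rfl rfl),
    Finset.sum_congr rfl (fun p _ => if_congr (fact_c hz hd _) rfl rfl)] at k2
  omega

lemma key_mu (μ : ℕ) (L : Fin μ → ℕ) (hpos : ∀ ν, 0 < L ν) (hodd : ∀ ν, Odd (L ν)) (q : ℂ[X])
    (hq : (X + 1) * q =
      (∏ ν : Fin μ, ((X : ℂ[X]) ^ (L ν) + 1)) *
      (∏ τ : Fin μ, ((X : ℂ[X]) ^ (2 * L τ) - 1) ^ ((L τ - 1) / 2)) *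
      ∏ p ∈ Finset.univ.filter (fun p : Fin μ × Fin μ => p.1 < p.2),
        ((X : ℂ[X]) ^ (2 * Nat.lcm (L p.1) (L p.2)) - 1) ^ Nat.gcd (L p.1) (L p.2)) :
    1 + rootMultiplicity (-1) q = μ + rootMultiplicity 1 q := by
  have k1 := key μ L hpos q hq (-1)
  have k2 := key μ L hpos q hq 1
  rw [if_pos rfl] at k1
  rw [if_neg (by norm_num)] at k2
  have e1 : ∀ m : ℕ, Odd m → ((-1 : ℂ)) ^ m = -1 := fun m hm => hm.neg_one_pow
  have e2 : ∀ a : ℕ, ((-1 : ℂ)) ^ (2*a) = 1 := fun a => by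
    rw [pow_mul]; norm_num
  rw [Finset.filter_congr (fun ν _ => iff_of_true (e1 _ (hodd ν)) trivial),
    Finset.filter_true, Finset.card_univ, Fintype.card_fin,
    Finset.sum_congr rfl (fun τ _ => if_pos (e2 (L τ))),
    Finset.sum_congr rfl (fun p _ => if_pos (e2 _))] at k1
  rw [Finset.filter_congr (fun ν _ => iff_of_false (by norm_num) not_false),
    Finset.filter_false, Finset.card_empty,
    Finset.sum_congr rfl (fun τ _ => if_pos (by norm_num)),
    Finset.sum_congr rfl (fun p _ => if_pos (by norm_num))] at k2
  omega

lemma count_lemma (ℓ : ℕ) (c c' : ℕ → ℕ)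
    (hc0 : ∀ e, e = 0 ∨ ℓ < e → c e = 0)
    (hc0' : ∀ e, e = 0 ∨ ℓ < e → c' e = 0)
    (hA : ∀ d, 1 ≤ d →
      (∑ e ∈ Finset.range (ℓ+1), if d ∣ e then c e else 0) =
      (∑ e ∈ Finset.range (ℓ+1), if d ∣ e then c' e else 0)) :
    ∀ d, c d = c' d := by
  have main : ∀ k d, 1 ≤ d → ℓ < d + k → c d = c' d := by
    intro k
    induction k with
    | zero => intro d hd hlt; rw [hc0 d (Or.inr (by omega)), hc0' d (Or.inr (by omega))]
    | succ k ih =>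
      intro d hd hlt
      by_cases hdl : d ≤ ℓ
      · have hg : ∀ e ∈ (Finset.range (ℓ+1)).erase d,
            (if d ∣ e then c e else 0) = (if d ∣ e then c' e else 0) := by
          intro e he
          rw [Finset.mem_erase, Finset.mem_range] at he
          by_cases hdvd : d ∣ e
          · rcases Nat.eq_zero_or_pos e with rfl | hepos
            · rw [if_pos hdvd, if_pos hdvd, hc0 0 (Or.inl rfl), hc0' 0 (Or.inl rfl)]
            · have hde : d ≤ e := Nat.le_of_dvd hepos hdvd
              have hne : e ≠ d := he.1
              rw [if_pos hdvd, if_pos hdvd, ih e (by omega) (by omega)]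
          · rw [if_neg hdvd, if_neg hdvd]
        have hmem : d ∈ Finset.range (ℓ+1) := Finset.mem_range.2 (by omega)
        have h1 := hA d hd
        rw [← Finset.add_sum_erase _ _ hmem, ← Finset.add_sum_erase _ _ hmem,
          Finset.sum_congr rfl hg] at h1
        have h2 := Nat.add_right_cancel h1
        rwa [if_pos dvd_rfl, if_pos dvd_rfl] at h2
      · rw [hc0 d (Or.inr (by omega)), hc0' d (Or.inr (by omega))]
  intro d
  rcases Nat.eq_zero_or_pos d with rfl | hd
  · rw [hc0 0 (Or.inl rfl), hc0' 0 (Or.inl rfl)]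
  · exact main (ℓ+1) d hd (by omega)

lemma card_div_eq_sum (ℓ μ : ℕ) (L : Fin μ → ℕ) (hle : ∀ ν, L ν ≤ ℓ) (d : ℕ) :
    (Finset.univ.filter (fun ν => d ∣ L ν)).card =
      ∑ e ∈ Finset.range (ℓ+1),
        if d ∣ e then (Finset.univ.filter (fun ν => L ν = e)).card else 0 := by
  have step1 : ∀ e, (if d ∣ e then (Finset.univ.filter (fun ν => L ν = e)).card else 0)
      = ∑ ν : Fin μ, if L ν = e then (if d ∣ e then 1 else 0) else 0 := by
    intro e
    rw [Finset.card_filter]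
    by_cases h : d ∣ e
    · simp [h]
    · simp [h]
  rw [Finset.sum_congr rfl fun e _ => step1 e, Finset.sum_comm]
  rw [Finset.card_filter]
  refine Finset.sum_congr rfl fun ν _ => ?_
  rw [Finset.sum_ite_eq]
  rw [if_pos (Finset.mem_range.2 (by have := hle ν; omega))]

/-- Let `ℓ⃗ = (ℓ_μ ≥ ⋯ ≥ ℓ_1)` and `ℓ⃗' = (ℓ'_{μ'} ≥ ⋯ ≥ ℓ'_1)` be
partitions of the same integer `ℓ ≥ 1` into odd positive parts, and define `q_{ℓ⃗}` by
`(t+1)·q_{ℓ⃗}(t) = (∏_ν (t^{ℓ_ν}+1)) · (∏_τ (t^{2ℓ_τ}-1)^{(ℓ_τ-1)/2}) ·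
(∏_{ρ<σ} (t^{2·lcm(ℓ_ρ,ℓ_σ)}-1)^{gcd(ℓ_ρ,ℓ_σ)})`, similarly `q_{ℓ⃗'}`.
If `q_{ℓ⃗} = q_{ℓ⃗'}` then `μ = μ'` and `ℓ_ν = ℓ'_ν` for all `ν`. -/
theorem stmt13 (ℓ μ μ' : ℕ) (hℓ : 1 ≤ ℓ) (L : Fin μ → ℕ) (L' : Fin μ' → ℕ)
    (hpos : ∀ ν, 0 < L ν) (hodd : ∀ ν, Odd (L ν)) (hmono : Monotone L)
    (hsum : ∑ ν, L ν = ℓ)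
    (hpos' : ∀ ν, 0 < L' ν) (hodd' : ∀ ν, Odd (L' ν)) (hmono' : Monotone L')
    (hsum' : ∑ ν, L' ν = ℓ)
    (q q' : ℂ[X])
    (hq : (X + 1) * q =
      (∏ ν : Fin μ, ((X : ℂ[X]) ^ (L ν) + 1)) *
      (∏ τ : Fin μ, ((X : ℂ[X]) ^ (2 * L τ) - 1) ^ ((L τ - 1) / 2)) *
      ∏ p ∈ Finset.univ.filter (fun p : Fin μ × Fin μ => p.1 < p.2),
        ((X : ℂ[X]) ^ (2 * Nat.lcm (L p.1) (L p.2)) - 1) ^ Nat.gcd (L p.1) (L p.2))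
    (hq' : (X + 1) * q' =
      (∏ ν : Fin μ', ((X : ℂ[X]) ^ (L' ν) + 1)) *
      (∏ τ : Fin μ', ((X : ℂ[X]) ^ (2 * L' τ) - 1) ^ ((L' τ - 1) / 2)) *
      ∏ p ∈ Finset.univ.filter (fun p : Fin μ' × Fin μ' => p.1 < p.2),
        ((X : ℂ[X]) ^ (2 * Nat.lcm (L' p.1) (L' p.2)) - 1) ^ Nat.gcd (L' p.1) (L' p.2))
    (heq : q = q') :
    μ = μ' ∧ ∀ (ν : ℕ) (h1 : ν < μ) (h2 : ν < μ'), L ⟨ν, h1⟩ = L' ⟨ν, h2⟩ := by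
  subst heq
  -- μ = μ'
  have hmu : μ = μ' := by
    have m1 := key_mu μ L hpos hodd q hq
    have m2 := key_mu μ' L' hpos' hodd' q hq'
    omega
  -- divisor counts agree
  have hAdvd : ∀ d, 1 ≤ d →
      (Finset.univ.filter (fun ν => d ∣ L ν)).card =
      (Finset.univ.filter (fun ν => d ∣ L' ν)).card := by
    intro d hd
    rcases Nat.even_or_odd d with hev | hodd_d
    · -- even d divides no odd number
      have h0 : ∀ (n : ℕ) (f : Fin n → ℕ) (ho : ∀ ν, Odd (f ν)),
          (Finset.univ.filter (fun ν => d ∣ f ν)).card = 0 := by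
        intro n f ho
        rw [Finset.card_eq_zero, Finset.filter_eq_empty_iff]
        intro ν _ hdvd
        have h2 : 2 ∣ f ν := (hev.two_dvd).trans hdvd
        exact (Nat.not_even_iff_odd.2 (ho ν)) (even_iff_two_dvd.2 h2)
      rw [h0 μ L hodd, h0 μ' L' hodd']
    · rcases Nat.lt_or_ge d 3 with hd3 | hd3
      · -- d = 1
        have hd1 : d = 1 := by
          rcases hodd_d with ⟨k, hk⟩
          omega
        subst hd1
        have t1 : (Finset.univ.filter (fun ν : Fin μ => 1 ∣ L ν)) = Finset.univ :=
          Finset.filter_true_of_mem fun _ _ => one_dvd _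
        have t2 : (Finset.univ.filter (fun ν : Fin μ' => 1 ∣ L' ν)) = Finset.univ :=
          Finset.filter_true_of_mem fun _ _ => one_dvd _
        rw [t1, t2, Finset.card_univ, Finset.card_univ, Fintype.card_fin, Fintype.card_fin, hmu]
      · -- d odd, d ≥ 3
        set z := Complex.exp (2 * Real.pi * Complex.I / (2*d)) with hzdef
        have hz : IsPrimitiveRoot z (2*d) := by
          have := Complex.isPrimitiveRoot_exp (2*d) (by omega)
          simpa using this
        have k1 := keyd μ L hpos hodd q hq d hodd_d hd3 z hz
        have k2 := keyd μ' L' hpos' hodd' q hq' d hodd_d hd3 z hz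
        omega
  -- counts of each value agree
  have hle : ∀ ν, L ν ≤ ℓ := by
    intro ν
    rw [← hsum]
    exact Finset.single_le_sum (fun i _ => Nat.zero_le _) (Finset.mem_univ ν)
  have hle' : ∀ ν, L' ν ≤ ℓ := by
    intro ν
    rw [← hsum']
    exact Finset.single_le_sum (fun i _ => Nat.zero_le _) (Finset.mem_univ ν)
  have hcount : ∀ e, (Finset.univ.filter (fun ν => L ν = e)).card =
      (Finset.univ.filter (fun ν => L' ν = e)).card := by
    refine count_lemma ℓ _ _ ?_ ?_ ?_
    · intro e he
      rw [Finset.card_eq_zero, Finset.filter_eq_empty_iff]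
      intro ν _ hLe
      rcases he with rfl | hlt
      · exact absurd hLe (hpos ν).ne'
      · exact absurd hLe (by have := hle ν; omega)
    · intro e he
      rw [Finset.card_eq_zero, Finset.filter_eq_empty_iff]
      intro ν _ hLe
      rcases he with rfl | hlt
      · exact absurd hLe (hpos' ν).ne'
      · exact absurd hLe (by have := hle' ν; omega)
    · intro d hd
      rw [← card_div_eq_sum ℓ μ L hle d, ← card_div_eq_sum ℓ μ' L' hle' d]
      exact hAdvd d hd
  -- from counts to sorted lists
  have hml : (List.ofFn L : Multiset ℕ) = (List.ofFn L' : Multiset ℕ) := by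
    ext e
    rw [List.ofFn_eq_map, List.ofFn_eq_map, ← Multiset.map_coe, ← Multiset.map_coe,
      Multiset.count_map, Multiset.count_map]
    have c1 : ((List.finRange μ : Multiset (Fin μ)).filter (fun a => e = L a)).card =
        (Finset.univ.filter (fun ν => L ν = e)).card := by
      rw [show (Finset.univ : Finset (Fin μ)).filter (fun ν => L ν = e) =
        ⟨((List.finRange μ : Multiset (Fin μ)).filter (fun a => L a = e)), by
          exact Multiset.Nodup.filter _ (by simpa using (List.nodup_finRange μ))⟩ from ?_]
      · simp only [Finset.card_mk]
        congr 1
        exact Multiset.filter_congr fun a _ => by constructor <;> exact Eq.symm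
      · ext a
        simp [Finset.mem_filter, List.mem_finRange]
    have c2 : ((List.finRange μ' : Multiset (Fin μ')).filter (fun a => e = L' a)).card =
        (Finset.univ.filter (fun ν => L' ν = e)).card := by
      rw [show (Finset.univ : Finset (Fin μ')).filter (fun ν => L' ν = e) =
        ⟨((List.finRange μ' : Multiset (Fin μ')).filter (fun a => L' a = e)), by
          exact Multiset.Nodup.filter _ (by simpa using (List.nodup_finRange μ'))⟩ from ?_]
      · simp only [Finset.card_mk]
        congr 1
        exact Multiset.filter_congr fun a _ => by constructor <;> exact Eq.symm
      · ext a
        simp [Finset.mem_filter, List.mem_finRange]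
    rw [c1, c2]
    exact hcount e
  have hperm : (List.ofFn L).Perm (List.ofFn L') := Multiset.coe_eq_coe.1 hml
  have hll : List.ofFn L = List.ofFn L' :=
    List.Perm.eq_of_sortedLE (hmono.sortedLE_ofFn) (hmono'.sortedLE_ofFn) hperm
  refine ⟨hmu, fun ν h1 h2 => ?_⟩
  have g1 : (List.ofFn L)[ν]'(by simpa using h1) =
      (List.ofFn L')[ν]'(by simpa using h2) := by
    simp only [hll]
  rw [List.getElem_ofFn, List.getElem_ofFn] at g1
  simpa using g1
end

section
/- Let ℓ ≥ 2 and let ℓ⃗ and ℓ⃗' be partitions of ℓ+1, each into an odd number of positive parts, with associated elements n_{ℓ⃗} and n_{ℓ⃗'} of SO_{2ℓ+2}(ℂ). If there exists h ∈ SO_{2ℓ+2}(ℂ) with n_{ℓ⃗'} = h · n_{ℓ⃗} · θ(h)⁻¹, where θ(g) = J g J, then ℓ⃗ = ℓ⃗'. -/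
open Matrix

namespace Stmt19

/-- The anti-diagonal matrix `K` with ones on the anti-diagonal. -/
noncomputable def K (ℓ : ℕ) : Matrix (Fin (2*ℓ+2)) (Fin (2*ℓ+2)) ℂ :=
  Matrix.of fun i j => if (i.val + 1) + (j.val + 1) = (2*ℓ+2) + 1 then 1 else 0

/-- The matrix `J ∈ O_{2ℓ+2}(ℂ)` (1-based indices). -/
noncomputable def J (ℓ : ℕ) : Matrix (Fin (2*ℓ+2)) (Fin (2*ℓ+2)) ℂ :=
  Matrix.of fun i j =>
    if i = j ∧ i.val + 1 ≠ ℓ + 1 ∧ i.val + 1 ≠ ℓ + 2 then 1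
    else if (i.val + 1 = ℓ + 1 ∧ j.val + 1 = ℓ + 2) ∨
        (i.val + 1 = ℓ + 2 ∧ j.val + 1 = ℓ + 1) then 1
    else 0

/-- The matrix `s_k ∈ SO_{2ℓ+2}(ℂ)` (1-based indices). -/
noncomputable def s (ℓ k : ℕ) : Matrix (Fin (2*ℓ+2)) (Fin (2*ℓ+2)) ℂ :=
  Matrix.of fun i j =>
    if i = j ∧ i.val + 1 ≠ k ∧ i.val + 1 ≠ k + 1 ∧
        i.val + 1 ≠ 2*ℓ - k + 2 ∧ i.val + 1 ≠ 2*ℓ - k + 3 then 1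
    else if i ≠ j ∧ ((i.val + 1 = k ∧ j.val + 1 = k + 1) ∨
        (i.val + 1 = k + 1 ∧ j.val + 1 = k)) then 1
    else if i ≠ j ∧ ((i.val + 1 = 2*ℓ - k + 2 ∧ j.val + 1 = 2*ℓ - k + 3) ∨
        (i.val + 1 = 2*ℓ - k + 3 ∧ j.val + 1 = 2*ℓ - k + 2)) then 1
    else 0

/-- `t_k = s_k s_{k+1} ⋯ s_{ℓ-1} s_ℓ · J · s_ℓ s_{ℓ-1} ⋯ s_{k+1} s_k` (so `t_{ℓ+1} = J`). -/
noncomputable def t (ℓ k : ℕ) : Matrix (Fin (2*ℓ+2)) (Fin (2*ℓ+2)) ℂ :=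
  (List.ofFn fun a : Fin (ℓ + 1 - k) => s ℓ (k + a.val)).prod * J ℓ *
  (List.ofFn fun a : Fin (ℓ + 1 - k) => s ℓ (ℓ - a.val)).prod

/-- `n_{ℓ⃗} = ñ_{ℓ⃗} · J` with
`ñ_{ℓ⃗} = ∏_{ν=1}^{μ} ( s_{ℓ'_ν+1} ⋯ s_{ℓ'_ν+ℓ_ν-1} · t_{ℓ'_ν+ℓ_ν} )`. -/
noncomputable def n (ℓ μ : ℕ) (L : Fin μ → ℕ) : Matrix (Fin (2*ℓ+2)) (Fin (2*ℓ+2)) ℂ :=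
  (List.ofFn fun ν : Fin μ =>
    (List.ofFn fun a : Fin (L ν - 1) =>
      s ℓ ((∑ j ∈ Finset.Iio ν, L j) + a.val + 1)).prod *
    t ℓ ((∑ j ∈ Finset.Iio ν, L j) + L ν)).prod * J ℓ

open Equiv

lemma permMatrix_apply {m : ℕ} (σ : Equiv.Perm (Fin m)) (i j : Fin m) :
    σ.permMatrix ℂ i j = if σ i = j then 1 else 0 := by
  simp [Equiv.Perm.permMatrix, PEquiv.toMatrix, Equiv.toPEquiv_apply, eq_comm]

lemma permMatrix_trans {m : ℕ} (σ τ : Equiv.Perm (Fin m)) :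
    Equiv.Perm.permMatrix ℂ (σ.trans τ) = σ.permMatrix ℂ * τ.permMatrix ℂ := by
  rw [Equiv.Perm.permMatrix, Equiv.toPEquiv_trans, PEquiv.toMatrix_trans]

lemma permMatrix_refl {m : ℕ} : Equiv.Perm.permMatrix ℂ (Equiv.refl (Fin m)) = 1 := by
  simp [Equiv.Perm.permMatrix]

/-- left-to-right product of permutations (apply head first). -/
def tprod {α : Type*} (l : List (Equiv.Perm α)) : Equiv.Perm α :=
  l.foldr Equiv.trans (Equiv.refl α)

@[simp] lemma tprod_nil {α : Type*} : tprod ([] : List (Equiv.Perm α)) = Equiv.refl α := rfl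

@[simp] lemma tprod_cons {α : Type*} (a : Equiv.Perm α) (l : List (Equiv.Perm α)) :
    tprod (a :: l) = a.trans (tprod l) := rfl

lemma tprod_append {α : Type*} (l₁ l₂ : List (Equiv.Perm α)) :
    tprod (l₁ ++ l₂) = (tprod l₁).trans (tprod l₂) := by
  induction l₁ with
  | nil => simp [tprod]
  | cons a l ih =>
      simp only [List.cons_append, tprod_cons, ih, ← Equiv.trans_assoc]

lemma tprod_concat {α : Type*} (l : List (Equiv.Perm α)) (a : Equiv.Perm α) :
    tprod (l.concat a) = (tprod l).trans a := by
  rw [List.concat_eq_append, tprod_append]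
  simp only [tprod_cons, tprod_nil, Equiv.trans_refl]

lemma prod_permMatrix {m : ℕ} (l : List (Equiv.Perm (Fin m))) :
    (l.map (fun p => p.permMatrix ℂ)).prod = (tprod l).permMatrix ℂ := by
  induction l with
  | nil => simp [permMatrix_refl]
  | cons a l ih => simp [ih, permMatrix_trans]

section
variable (ℓ : ℕ)

def fm (x : ℕ) : Fin (2*ℓ+2) := ⟨x % (2*ℓ+2), Nat.mod_lt _ (by omega)⟩

lemma fm_val {x : ℕ} (h : x < 2*ℓ+2) : (fm ℓ x).val = x := Nat.mod_eq_of_lt h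

lemma swap_val {a b x : Fin (2*ℓ+2)} :
    ((Equiv.swap a b) x).val =
      if x.val = a.val then b.val else if x.val = b.val then a.val else x.val := by
  rw [Equiv.swap_apply_def]
  split_ifs with h1 h2 h3 h4 h5 <;> simp_all [Fin.ext_iff]

def pS (k : ℕ) : Equiv.Perm (Fin (2*ℓ+2)) :=
  (Equiv.swap (fm ℓ (k-1)) (fm ℓ k)).trans
    (Equiv.swap (fm ℓ (2*ℓ+1-k)) (fm ℓ (2*ℓ+2-k)))

def pJ : Equiv.Perm (Fin (2*ℓ+2)) := Equiv.swap (fm ℓ ℓ) (fm ℓ (ℓ+1))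

lemma pS_apply {k : ℕ} (h1 : 1 ≤ k) (h2 : k ≤ ℓ) (x : Fin (2*ℓ+2)) :
    ((pS ℓ k) x).val =
      if x.val = k-1 then k else if x.val = k then k-1
      else if x.val = 2*ℓ+1-k then 2*ℓ+2-k
      else if x.val = 2*ℓ+2-k then 2*ℓ+1-k else x.val := by
  have hx := x.isLt
  rw [pS, Equiv.trans_apply, swap_val, swap_val]
  rw [fm_val ℓ (by omega), fm_val ℓ (by omega), fm_val ℓ (by omega), fm_val ℓ (by omega)]
  split_ifs <;> omega

lemma pJ_apply (x : Fin (2*ℓ+2)) :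
    ((pJ ℓ) x).val = if x.val = ℓ then ℓ+1 else if x.val = ℓ+1 then ℓ else x.val := by
  have hx := x.isLt
  rw [pJ, swap_val, fm_val ℓ (by omega), fm_val ℓ (by omega)]


lemma J_eq : J ℓ = (pJ ℓ).permMatrix ℂ := by
  ext i j
  have hi := i.isLt
  have hj := j.isLt
  rw [permMatrix_apply, J]
  simp only [Matrix.of_apply, ne_eq, ← Fin.val_eq_val]
  rw [pJ_apply ℓ]
  split_ifs <;> first | rfl | (exfalso; omega)

set_option maxHeartbeats 2000000 in
lemma s_eq {k : ℕ} (h1 : 1 ≤ k) (h2 : k ≤ ℓ) : s ℓ k = (pS ℓ k).permMatrix ℂ := by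
  ext i j
  have hi := i.isLt
  have hj := j.isLt
  rw [permMatrix_apply, s]
  simp only [Matrix.of_apply, ne_eq, ← Fin.val_eq_val]
  rw [pS_apply ℓ h1 h2]
  split_ifs <;> first | rfl | (exfalso; omega)

lemma pS_symm {k : ℕ} (h1 : 1 ≤ k) (h2 : k ≤ ℓ) : (pS ℓ k).symm = pS ℓ k := by
  apply Equiv.ext
  intro x
  rw [Equiv.symm_apply_eq]
  have h3 := pS_apply ℓ h1 h2 x
  have h4 := pS_apply ℓ h1 h2 (pS ℓ k x)
  rw [h3] at h4
  have hx := x.isLt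
  apply Fin.ext
  rw [h4]
  split_ifs <;> omega

/-- chain `s_k s_{k+1} ⋯ s_{k+r-1}` as permutation. -/
def chainP (k r : ℕ) : Equiv.Perm (Fin (2*ℓ+2)) :=
  tprod (List.ofFn fun a : Fin r => pS ℓ (k + a.val))

lemma chainP_succ (k r : ℕ) :
    chainP ℓ k (r+1) = (chainP ℓ k r).trans (pS ℓ (k + r)) := by
  rw [chainP, List.ofFn_succ']
  rw [tprod_concat]
  rfl

lemma chainP_cons (k r : ℕ) : chainP ℓ k (r+1) = (pS ℓ k).trans (chainP ℓ (k+1) r) := by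
  induction r with
  | zero =>
      rw [chainP_succ]
      show (chainP ℓ k 0).trans _ = _
      rw [show chainP ℓ k 0 = Equiv.refl _ from rfl,
        show chainP ℓ (k+1) 0 = Equiv.refl _ from rfl]
      simp
  | succ r ih =>
      rw [chainP_succ, ih, Equiv.trans_assoc]
      have hidx : k + (r+1) = k + 1 + r := by omega
      rw [hidx, ← chainP_succ]

lemma chainP_apply {k r : ℕ} (h1 : 1 ≤ k) (h2 : k + r ≤ ℓ + 1) (x : Fin (2*ℓ+2)) :
    ((chainP ℓ k r) x).val =
      if x.val = k-1 then k-1+r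
      else if k-1 < x.val ∧ x.val ≤ k-1+r then x.val - 1
      else if x.val = 2*ℓ+2-k then 2*ℓ+2-k-r
      else if 2*ℓ+2-k-r ≤ x.val ∧ x.val < 2*ℓ+2-k then x.val + 1
      else x.val := by
  have hx := x.isLt
  induction r with
  | zero =>
      simp only [chainP, List.ofFn_zero, tprod_nil, Equiv.refl_apply]
      split_ifs <;> omega
  | succ r ih =>
      rw [chainP_succ, Equiv.trans_apply,
        pS_apply ℓ (by omega : 1 ≤ k + r) (by omega : k + r ≤ ℓ),
        ih (by omega)]
      split_ifs <;> omega

lemma chainP_symm_desc {k r : ℕ} (h1 : 1 ≤ k) (h2 : k + r ≤ ℓ + 1) :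
    tprod (List.ofFn fun a : Fin r => pS ℓ (k + r - 1 - a.val)) = (chainP ℓ k r).symm := by
  induction r generalizing k with
  | zero => simp [chainP, tprod]
  | succ r ih =>
      have hhead := chainP_cons ℓ k r
      have hlist : (List.ofFn fun a : Fin (r+1) => pS ℓ (k + (r+1) - 1 - a.val)) =
          (List.ofFn fun a : Fin r => pS ℓ ((k+1) + r - 1 - a.val)).concat (pS ℓ k) := by
        rw [List.ofFn_succ']
        congr 1
        · exact congrArg List.ofFn (funext fun a => congrArg (pS ℓ) (by
            first
            | (simp only [Fin.coe_castSucc, Fin.val_last]; omega)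
            | omega))
        · exact congrArg (pS ℓ) (by
            first
            | (simp only [Fin.coe_castSucc, Fin.val_last]; omega)
            | omega)
      rw [hlist, tprod_concat, ih (by omega) (by omega), hhead]
      have hsymm : ((pS ℓ k).trans (chainP ℓ (k+1) r)).symm
          = (chainP ℓ (k+1) r).symm.trans (pS ℓ k).symm := rfl
      rw [hsymm, pS_symm ℓ h1 (by omega)]

/-- `t_k` as permutation: the swap `(k-1, 2ℓ+2-k)` (0-based). -/
def pT (k : ℕ) : Equiv.Perm (Fin (2*ℓ+2)) :=
  Equiv.swap (fm ℓ (k-1)) (fm ℓ (2*ℓ+2-k))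

lemma t_eq {k : ℕ} (h1 : 1 ≤ k) (h2 : k ≤ ℓ + 1) : t ℓ k = (pT ℓ k).permMatrix ℂ := by
  have hr : k + (ℓ + 1 - k) = ℓ + 1 := by omega
  -- identify the two matrix lists with perm lists
  have hl1 : (List.ofFn fun a : Fin (ℓ + 1 - k) => s ℓ (k + a.val)) =
      (List.ofFn fun a : Fin (ℓ + 1 - k) => pS ℓ (k + a.val)).map
        (fun p => p.permMatrix ℂ) := by
    rw [List.map_ofFn]
    congr 1
    funext a
    have := a.isLt
    exact s_eq ℓ (by omega) (by omega)
  have hl2 : (List.ofFn fun a : Fin (ℓ + 1 - k) => s ℓ (ℓ - a.val)) =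
      (List.ofFn fun a : Fin (ℓ + 1 - k) => pS ℓ (k + (ℓ + 1 - k) - 1 - a.val)).map
        (fun p => p.permMatrix ℂ) := by
    rw [List.map_ofFn]
    exact congrArg List.ofFn (funext fun a => by
      have ha := a.isLt
      have hv : k + (ℓ + 1 - k) - 1 - a.val = ℓ - a.val := by omega
      show s ℓ (ℓ - a.val) = (pS ℓ (k + (ℓ+1-k) - 1 - a.val)).permMatrix ℂ
      rw [hv]
      exact s_eq ℓ (by omega) (by omega))
  rw [t, hl1, hl2, prod_permMatrix, prod_permMatrix, chainP_symm_desc ℓ h1 (by omega),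
    J_eq ℓ]
  rw [show tprod (List.ofFn fun a : Fin (ℓ + 1 - k) => pS ℓ (k + a.val)) = chainP ℓ k (ℓ+1-k) from rfl]
  rw [← permMatrix_trans, ← permMatrix_trans]
  congr 1
  set e := chainP ℓ k (ℓ+1-k) with he
  have e1 : e (fm ℓ (k-1)) = fm ℓ ℓ := by
    apply Fin.ext
    rw [chainP_apply ℓ h1 (by omega), fm_val ℓ (by omega), fm_val ℓ (by omega)]
    split_ifs <;> omega
  have e2 : e (fm ℓ (2*ℓ+2-k)) = fm ℓ (ℓ+1) := by
    apply Fin.ext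
    rw [chainP_apply ℓ h1 (by omega), fm_val ℓ (by omega), fm_val ℓ (by omega)]
    split_ifs <;> omega
  have : pT ℓ k = Equiv.swap (e.symm (fm ℓ ℓ)) (e.symm (fm ℓ (ℓ+1))) := by
    rw [← e1, ← e2, Equiv.symm_apply_apply, Equiv.symm_apply_apply, pT]
  rw [this, pJ, ← Equiv.trans_swap_trans_symm (fm ℓ ℓ) (fm ℓ (ℓ+1)) e, Equiv.trans_assoc]


lemma pT_apply {k : ℕ} (h1 : 1 ≤ k) (h2 : k ≤ ℓ+1) (x : Fin (2*ℓ+2)) :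
    ((pT ℓ k) x).val =
      if x.val = k-1 then 2*ℓ+2-k else if x.val = 2*ℓ+2-k then k-1 else x.val := by
  have hx := x.isLt
  rw [pT, swap_val, fm_val ℓ (by omega), fm_val ℓ (by omega)]

def blockP (p L : ℕ) : Equiv.Perm (Fin (2*ℓ+2)) :=
  (chainP ℓ (p+1) (L-1)).trans (pT ℓ (p+L))

lemma blockP_apply {p L : ℕ} (h1 : 1 ≤ L) (h2 : p + L ≤ ℓ+1) (x : Fin (2*ℓ+2)) :
    ((blockP ℓ p L) x).val =
      if x.val = p then 2*ℓ+2-p-L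
      else if p < x.val ∧ x.val < p + L then x.val - 1
      else if x.val = 2*ℓ+1-p then p+L-1
      else if 2*ℓ+2-p-L ≤ x.val ∧ x.val < 2*ℓ+1-p then x.val + 1
      else x.val := by
  have hx := x.isLt
  rw [blockP, Equiv.trans_apply, pT_apply ℓ (by omega) (by omega),
    chainP_apply ℓ (by omega) (by omega)]
  split_ifs <;> omega

def sigmaP (μ : ℕ) (L : Fin μ → ℕ) : Equiv.Perm (Fin (2*ℓ+2)) :=
  tprod (List.ofFn fun ν : Fin μ => blockP ℓ (∑ j ∈ Finset.Iio ν, L j) (L ν))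

lemma J_mul_J : J ℓ * J ℓ = 1 := by
  rw [J_eq, ← permMatrix_trans, pJ, Equiv.swap_swap, permMatrix_refl]

lemma n_eq {μ : ℕ} {L : Fin μ → ℕ} (hpos : ∀ ν, 0 < L ν)
    (hble : ∀ ν : Fin μ, (∑ j ∈ Finset.Iio ν, L j) + L ν ≤ ℓ+1) :
    n ℓ μ L * J ℓ = (sigmaP ℓ μ L).permMatrix ℂ := by
  have hlist : (List.ofFn fun ν : Fin μ =>
      (List.ofFn fun a : Fin (L ν - 1) =>
        s ℓ ((∑ j ∈ Finset.Iio ν, L j) + a.val + 1)).prod *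
      t ℓ ((∑ j ∈ Finset.Iio ν, L j) + L ν)) =
      (List.ofFn fun ν : Fin μ => blockP ℓ (∑ j ∈ Finset.Iio ν, L j) (L ν)).map
        (fun p => p.permMatrix ℂ) := by
    rw [List.map_ofFn]
    refine congrArg List.ofFn (funext fun ν => ?_)
    have hb := hble ν
    have hp := hpos ν
    have hinner : (List.ofFn fun a : Fin (L ν - 1) =>
        s ℓ ((∑ j ∈ Finset.Iio ν, L j) + a.val + 1)) =
        (List.ofFn fun a : Fin (L ν - 1) =>
          pS ℓ ((∑ j ∈ Finset.Iio ν, L j) + 1 + a.val)).map (fun p => p.permMatrix ℂ) := by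
      rw [List.map_ofFn]
      refine congrArg List.ofFn (funext fun a => ?_)
      have ha := a.isLt
      have hidx : (∑ j ∈ Finset.Iio ν, L j) + a.val + 1
          = (∑ j ∈ Finset.Iio ν, L j) + 1 + a.val := by omega
      rw [hidx]
      exact s_eq ℓ (by omega) (by omega)
    show _ * _ = Equiv.Perm.permMatrix ℂ (blockP ℓ _ _)
    rw [hinner, prod_permMatrix, t_eq ℓ (by omega) (by omega), blockP, permMatrix_trans]
    rfl
  rw [n, hlist, prod_permMatrix, mul_assoc, J_mul_J, mul_one]
  rfl

end

lemma tprod_fix {α : Type*} (l : List (Equiv.Perm α)) (x : α)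
    (h : ∀ g ∈ l, g x = x) : tprod l x = x := by
  induction l with
  | nil => rfl
  | cons a l ih =>
      rw [tprod_cons, Equiv.trans_apply, h a List.mem_cons_self]
      exact ih (fun g hg => h g (List.mem_cons_of_mem a hg))


lemma tprod_ofFn_single {α : Type*} : ∀ {nn : ℕ} (B : Fin nn → Equiv.Perm α) (S : Set α)
    (ν : Fin nn), (∀ y ∈ S, B ν y ∈ S) → (∀ i, i ≠ ν → ∀ y ∈ S, B i y = y) →
    ∀ x ∈ S, tprod (List.ofFn B) x = B ν x := by
  intro nn
  induction nn with
  | zero => intro B S ν; exact ν.elim0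
  | succ m ih =>
      intro B S ν hcl hfix x hx
      rw [List.ofFn_succ, tprod_cons, Equiv.trans_apply]
      rcases Fin.eq_zero_or_eq_succ ν with rfl | ⟨j, rfl⟩
      · refine tprod_fix _ _ (fun g hg => ?_)
        obtain ⟨i, rfl⟩ := List.mem_ofFn.mp hg
        exact hfix i.succ (Fin.succ_ne_zero i) (B 0 x) (hcl x hx)
      · rw [hfix 0 (Fin.succ_ne_zero j).symm x hx]
        exact ih (fun i => B i.succ) S j (fun y hy => hcl y hy)
          (fun i hi y hy => hfix i.succ (by
            intro hc
            exact hi (Fin.succ_injective _ hc)) y hy) x hx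

section
variable (ℓ : ℕ)

section SigmaBlocks
variable {μ : ℕ} (L : Fin μ → ℕ)

/-- partial sums -/
def Pv (ν : Fin μ) : ℕ := ∑ j ∈ Finset.Iio ν, L j

lemma Pv_add (ν : Fin μ) : Pv L ν + L ν = ∑ j ∈ Finset.Iic ν, L j := by
  rw [Pv, add_comm, ← Finset.sum_insert (by simp)]
  congr 1
  ext j
  simp only [Finset.mem_insert, Finset.mem_Iio, Finset.mem_Iic]
  constructor
  · rintro (rfl | h')
    · exact le_refl _
    · exact le_of_lt h'
  · intro h'
    rcases eq_or_lt_of_le h' with h'' | h''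
    · left; exact h''
    · right; exact h''

variable (hsum : ∑ ν, L ν = ℓ + 1)

include hsum in
lemma Pv_le (ν : Fin μ) : Pv L ν + L ν ≤ ℓ + 1 := by
  rw [Pv_add, ← hsum]
  exact Finset.sum_le_sum_of_subset (Finset.subset_univ _)

include hsum in
lemma Pv_step {ν ν' : Fin μ} (h : ν < ν') : Pv L ν + L ν ≤ Pv L ν' := by
  rw [Pv_add, Pv]
  apply Finset.sum_le_sum_of_subset
  intro j hj
  simp only [Finset.mem_Iic] at hj
  simp only [Finset.mem_Iio]
  exact lt_of_le_of_lt hj h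

/-- the block of indices moved by the ν-th cycle -/
def Blk (ν : Fin μ) : Finset (Fin (2*ℓ+2)) :=
  Finset.univ.filter (fun x => (Pv L ν ≤ x.val ∧ x.val < Pv L ν + L ν) ∨
    (2*ℓ+2 - Pv L ν - L ν ≤ x.val ∧ x.val < 2*ℓ+2 - Pv L ν))

lemma mem_Blk {ν : Fin μ} {x : Fin (2*ℓ+2)} :
    x ∈ Blk ℓ L ν ↔ ((Pv L ν ≤ x.val ∧ x.val < Pv L ν + L ν) ∨
      (2*ℓ+2 - Pv L ν - L ν ≤ x.val ∧ x.val < 2*ℓ+2 - Pv L ν)) := by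
  simp [Blk]

/-- coordinates on the ν-th cycle -/
def psi (ν : Fin μ) (z : ℕ) : Fin (2*ℓ+2) :=
  fm ℓ (if z % (2 * L ν) < L ν then Pv L ν + L ν - 1 - z % (2 * L ν)
    else 2*ℓ+2 - Pv L ν - 2 * L ν + z % (2 * L ν))

variable (hpos : ∀ ν, 0 < L ν)

include hpos hsum in
lemma psi_val (ν : Fin μ) (z : ℕ) :
    (psi ℓ L ν z).val = if z % (2 * L ν) < L ν then Pv L ν + L ν - 1 - z % (2 * L ν)
      else 2*ℓ+2 - Pv L ν - 2 * L ν + z % (2 * L ν) := by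
  have h1 := Pv_le ℓ L hsum ν
  have h2 := hpos ν
  have h3 : z % (2 * L ν) < 2 * L ν := Nat.mod_lt _ (by omega)
  rw [psi]
  generalize z % (2 * L ν) = w at h3 ⊢
  split_ifs with h <;> exact fm_val ℓ (by omega)

include hpos hsum in
lemma psi_mem_Blk (ν : Fin μ) (z : ℕ) : psi ℓ L ν z ∈ Blk ℓ L ν := by
  have h1 := Pv_le ℓ L hsum ν
  have h2 := hpos ν
  have h3 : z % (2 * L ν) < 2 * L ν := Nat.mod_lt _ (by omega)
  rw [mem_Blk, psi_val ℓ L hsum hpos]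
  generalize z % (2 * L ν) = w at h3 ⊢
  split_ifs with h
  · left; omega
  · right; omega

include hpos hsum in
lemma Blk_eq_psi {ν : Fin μ} {x : Fin (2*ℓ+2)} (hx : x ∈ Blk ℓ L ν) :
    ∃ z < 2 * L ν, psi ℓ L ν z = x := by
  have h1 := Pv_le ℓ L hsum ν
  have h2 := hpos ν
  rw [mem_Blk] at hx
  refine ⟨if x.val < Pv L ν + L ν then Pv L ν + L ν - 1 - x.val
    else x.val - (2*ℓ+2 - Pv L ν - 2 * L ν), by split_ifs <;> omega, ?_⟩
  apply Fin.ext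
  rw [psi_val ℓ L hsum hpos]
  split_ifs <;> (rw [Nat.mod_eq_of_lt (by omega)] at *) <;> omega

include hpos hsum in
lemma blockP_notmem {ν : Fin μ} {x : Fin (2*ℓ+2)} (hx : x ∉ Blk ℓ L ν) :
    blockP ℓ (Pv L ν) (L ν) x = x := by
  have h1 := Pv_le ℓ L hsum ν
  have h2 := hpos ν
  have hx' := x.isLt
  rw [mem_Blk] at hx
  push_neg at hx
  apply Fin.ext
  rw [blockP_apply ℓ (by omega) (by omega)]
  split_ifs <;> omega

include hpos hsum in
lemma blockP_psi (ν : Fin μ) (z : ℕ) :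
    blockP ℓ (Pv L ν) (L ν) (psi ℓ L ν z) = psi ℓ L ν (z + 1) := by
  have h1 := Pv_le ℓ L hsum ν
  have h2 := hpos ν
  have h3 : z % (2 * L ν) < 2 * L ν := Nat.mod_lt _ (by omega)
  have hsucc : (z + 1) % (2 * L ν)
      = if z % (2 * L ν) + 1 = 2 * L ν then 0 else z % (2 * L ν) + 1 := by
    rw [Nat.add_mod, Nat.mod_eq_of_lt (show 1 < 2 * L ν by omega)]
    split_ifs with h
    · rw [h, Nat.mod_self]
    · exact Nat.mod_eq_of_lt (by omega)
  apply Fin.ext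
  rw [blockP_apply ℓ (by omega) (by omega), psi_val ℓ L hsum hpos,
    psi_val ℓ L hsum hpos, hsucc]
  generalize z % (2 * L ν) = w at h3 ⊢
  split_ifs <;> omega
include hpos hsum in
lemma Blk_disj {ν₁ ν₂ : Fin μ} (hne : ν₁ ≠ ν₂) {x : Fin (2*ℓ+2)}
    (h1 : x ∈ Blk ℓ L ν₁) : x ∉ Blk ℓ L ν₂ := by
  intro h2
  rw [mem_Blk] at h1 h2
  have e1 := Pv_le ℓ L hsum ν₁
  have e2 := Pv_le ℓ L hsum ν₂
  have p1 := hpos ν₁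
  have p2 := hpos ν₂
  rcases lt_or_gt_of_ne hne with h | h
  · have := Pv_step ℓ L hsum h; omega
  · have := Pv_step ℓ L hsum h; omega

include hpos hsum in
lemma blockP_mem {ν : Fin μ} {x : Fin (2*ℓ+2)} (hx : x ∈ Blk ℓ L ν) :
    blockP ℓ (Pv L ν) (L ν) x ∈ Blk ℓ L ν := by
  obtain ⟨z, hz, rfl⟩ := Blk_eq_psi ℓ L hsum hpos hx
  rw [blockP_psi ℓ L hsum hpos]
  exact psi_mem_Blk ℓ L hsum hpos ν _

include hpos hsum in
lemma sigmaP_apply_mem {ν : Fin μ} {x : Fin (2*ℓ+2)} (hx : x ∈ Blk ℓ L ν) :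
    sigmaP ℓ μ L x = blockP ℓ (Pv L ν) (L ν) x := by
  refine tprod_ofFn_single (fun ν' => blockP ℓ (Pv L ν') (L ν')) (↑(Blk ℓ L ν) : Set _)
    ν ?_ ?_ x (by simpa using hx)
  · intro y hy
    simp only [Finset.mem_coe] at hy ⊢
    exact blockP_mem ℓ L hsum hpos hy
  · intro i hi y hy
    simp only [Finset.mem_coe] at hy
    exact blockP_notmem ℓ L hsum hpos (Blk_disj ℓ L hsum hpos hi.symm hy)

include hpos hsum in
lemma sigmaP_pow_psi (m : ℕ) (ν : Fin μ) (z : ℕ) :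
    (sigmaP ℓ μ L ^ m) (psi ℓ L ν z) = psi ℓ L ν (z + m) := by
  induction m with
  | zero => simp
  | succ m ih =>
      rw [pow_succ', Equiv.Perm.mul_apply, ih,
        sigmaP_apply_mem ℓ L hsum hpos (psi_mem_Blk ℓ L hsum hpos ν (z+m)),
        blockP_psi ℓ L hsum hpos]
      exact congrArg (psi ℓ L ν) (by omega)

lemma psi_congr {ν : Fin μ} {z₁ z₂ : ℕ} (h : z₁ % (2 * L ν) = z₂ % (2 * L ν)) :
    psi ℓ L ν z₁ = psi ℓ L ν z₂ := by
  rw [psi, psi, h]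

include hpos hsum in
lemma exists_block (hμ0 : 0 < μ) {y : ℕ} (hy : y < ℓ + 1) :
    ∃ ν, Pv L ν ≤ y ∧ y < Pv L ν + L ν := by
  classical
  set S := Finset.univ.filter (fun ν : Fin μ => Pv L ν ≤ y) with hS
  have h0S : (⟨0, hμ0⟩ : Fin μ) ∈ S := by
    simp only [hS, Finset.mem_filter, Finset.mem_univ, true_and]
    have : Pv L ⟨0, hμ0⟩ = 0 := by
      rw [Pv]
      have hemp : Finset.Iio (⟨0, hμ0⟩ : Fin μ) = ∅ := by
        ext j
        simp only [Finset.mem_Iio, Finset.notMem_empty, iff_false, Fin.lt_def]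
        omega
      rw [hemp, Finset.sum_empty]
    omega
  have hSne : S.Nonempty := ⟨_, h0S⟩
  set ν := S.max' hSne with hν
  have hmem : ν ∈ S := S.max'_mem hSne
  have hPle : Pv L ν ≤ y := by
    simp only [hS, Finset.mem_filter] at hmem; exact hmem.2
  refine ⟨ν, hPle, ?_⟩
  by_contra hcon
  push_neg at hcon
  by_cases hlast : ν.val + 1 < μ
  · have hP' : Pv L ⟨ν.val + 1, hlast⟩ = Pv L ν + L ν := by
      rw [Pv_add, Pv]
      have hset : Finset.Iio (⟨ν.val + 1, hlast⟩ : Fin μ) = Finset.Iic ν := by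
        ext j
        simp only [Finset.mem_Iio, Finset.mem_Iic, Fin.lt_def, Fin.le_def]
        omega
      rw [hset]
    have hν'S : (⟨ν.val + 1, hlast⟩ : Fin μ) ∈ S := by
      simp only [hS, Finset.mem_filter, Finset.mem_univ, true_and]
      rw [hP']
      omega
    have hle := S.le_max' _ hν'S
    rw [← hν] at hle
    have hv : ν.val + 1 ≤ ν.val := by simpa [Fin.le_def] using hle
    omega
  · have huniv : Finset.Iic ν = Finset.univ := by
      ext j
      simp only [Finset.mem_Iic, Finset.mem_univ, iff_true, Fin.le_def]
      have := j.isLt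
      omega
    have : Pv L ν + L ν = ℓ + 1 := by
      rw [Pv_add, huniv, hsum]
    omega

include hpos hsum in
lemma Blk_cover (hμ0 : 0 < μ) (x : Fin (2*ℓ+2)) : ∃ ν, x ∈ Blk ℓ L ν := by
  have hx := x.isLt
  by_cases hp : x.val < ℓ + 1
  · obtain ⟨ν, h1, h2⟩ := exists_block ℓ L hsum hpos hμ0 hp
    exact ⟨ν, by rw [mem_Blk]; left; omega⟩
  · obtain ⟨ν, h1, h2⟩ := exists_block ℓ L hsum hpos hμ0
      (show 2*ℓ+1 - x.val < ℓ + 1 by omega)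
    refine ⟨ν, by rw [mem_Blk]; right; have := Pv_le ℓ L hsum ν; omega⟩

include hpos hsum in
lemma card_Blk (ν : Fin μ) : (Blk ℓ L ν).card = 2 * L ν := by
  classical
  have himg : Blk ℓ L ν = (Finset.range (2 * L ν)).image (psi ℓ L ν) := by
    ext x
    simp only [Finset.mem_image, Finset.mem_range]
    constructor
    · intro hx
      obtain ⟨z, hz, rfl⟩ := Blk_eq_psi ℓ L hsum hpos hx
      exact ⟨z, hz, rfl⟩
    · rintro ⟨z, hz, rfl⟩
      exact psi_mem_Blk ℓ L hsum hpos ν z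
  rw [himg, Finset.card_image_of_injOn, Finset.card_range]
  intro z₁ h₁ z₂ h₂ heq
  simp only [Finset.mem_coe, Finset.mem_range] at h₁ h₂
  have hv := congrArg Fin.val heq
  rw [psi_val ℓ L hsum hpos, psi_val ℓ L hsum hpos,
    Nat.mod_eq_of_lt h₁, Nat.mod_eq_of_lt h₂] at hv
  have e1 := Pv_le ℓ L hsum ν
  have p1 := hpos ν
  split_ifs at hv <;> omega

include hpos hsum in
lemma fix_count (hμ0 : 0 < μ) (m : ℕ) :
    (Finset.univ.filter (fun x : Fin (2*ℓ+2) => (sigmaP ℓ μ L ^ m) x = x)).card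
      = ∑ ν, if 2 * L ν ∣ m then 2 * L ν else 0 := by
  classical
  have hF : Finset.univ.filter (fun x : Fin (2*ℓ+2) => (sigmaP ℓ μ L ^ m) x = x)
      = (Finset.univ.filter (fun ν : Fin μ => 2 * L ν ∣ m)).biUnion (Blk ℓ L) := by
    ext x
    simp only [Finset.mem_filter, Finset.mem_univ, true_and, Finset.mem_biUnion]
    constructor
    · intro hfix
      obtain ⟨ν, hν⟩ := Blk_cover ℓ L hsum hpos hμ0 x
      obtain ⟨z, hz, rfl⟩ := Blk_eq_psi ℓ L hsum hpos hν
      refine ⟨ν, ?_, hν⟩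
      rw [sigmaP_pow_psi ℓ L hsum hpos] at hfix
      have hv := congrArg Fin.val hfix
      rw [psi_val ℓ L hsum hpos, psi_val ℓ L hsum hpos] at hv
      have e1 := Pv_le ℓ L hsum ν
      have p1 := hpos ν
      have h3 : (z + m) % (2 * L ν) < 2 * L ν := Nat.mod_lt _ (by omega)
      rw [Nat.mod_eq_of_lt hz] at hv
      have hmod : (z + m) % (2 * L ν) = z := by
        generalize (z + m) % (2 * L ν) = w at h3 hv
        split_ifs at hv <;> omega
      have hmeq : z % (2 * L ν) = (z + m) % (2 * L ν) := by
        rw [hmod, Nat.mod_eq_of_lt hz]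
      have hdv := (Nat.modEq_iff_dvd' (Nat.le_add_right z m)).mp hmeq
      have h4 : z + m - z = m := by omega
      rw [h4] at hdv
      exact hdv
    · rintro ⟨ν, hdvd, hν⟩
      obtain ⟨z, hz, rfl⟩ := Blk_eq_psi ℓ L hsum hpos hν
      rw [sigmaP_pow_psi ℓ L hsum hpos]
      apply psi_congr
      obtain ⟨c, rfl⟩ := hdvd
      rw [Nat.add_mul_mod_self_left]
  rw [hF, Finset.card_biUnion, Finset.sum_filter]
  · exact Finset.sum_congr rfl (fun ν _ => by
      split_ifs with h
      · exact card_Blk ℓ L hsum hpos ν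
      · rfl)
  · intro ν₁ h₁ ν₂ h₂ hne
    apply Finset.disjoint_left.mpr
    intro x hx₁ hx₂
    exact Blk_disj ℓ L hsum hpos hne hx₁ hx₂

end SigmaBlocks
end

lemma permMatrix_pow {N : ℕ} (σ : Equiv.Perm (Fin N)) (k : ℕ) :
    (σ.permMatrix ℂ)^k = (σ^k).permMatrix ℂ := by
  induction k with
  | zero => rw [pow_zero, pow_zero]; exact permMatrix_refl.symm
  | succ k ih =>
      have hperm : (σ^k).trans σ = σ^(k+1) := by
        rw [← Equiv.Perm.mul_def, ← pow_succ']
      rw [pow_succ, ih, ← permMatrix_trans, hperm]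

lemma trace_permMatrix_fix {N : ℕ} (σ : Equiv.Perm (Fin N)) :
    (σ.permMatrix ℂ).trace
      = ((Finset.univ.filter fun x => σ x = x).card : ℂ) := by
  classical
  rw [Matrix.trace]
  refine Eq.trans (Finset.sum_congr rfl fun x _ => ?_) (Finset.sum_boole _ _)
  rw [Matrix.diag_apply, permMatrix_apply]

lemma trace_pow_conj {N : ℕ} (A B h : Matrix (Fin N) (Fin N) ℂ)
    (hdet : IsUnit h.det) (hAB : B = h * A * h⁻¹) (m : ℕ) :
    (B^m).trace = (A^m).trace := by
  have hinv : h⁻¹ * h = 1 := Matrix.nonsing_inv_mul h hdet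
  have hinv' : h * h⁻¹ = 1 := Matrix.mul_nonsing_inv h hdet
  have hpow : B^m = h * A^m * h⁻¹ := by
    induction m with
    | zero => rw [pow_zero, pow_zero, mul_one, hinv']
    | succ m ih =>
        calc B^(m+1) = B^m * B := pow_succ B m
          _ = h * A^m * (h⁻¹ * h) * A * h⁻¹ := by
              rw [ih, hAB]; simp only [mul_assoc]
          _ = h * A^(m+1) * h⁻¹ := by
              rw [hinv, mul_one, pow_succ, mul_assoc h (A^m) A]
  rw [hpow, Matrix.trace_mul_cycle, hinv, one_mul]

/-- number of parts of a given size -/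
def cnt {μ : ℕ} (L : Fin μ → ℕ) (d : ℕ) : ℕ :=
  (Finset.univ.filter fun ν => L ν = d).card

lemma S_eq {μ : ℕ} (L : Fin μ → ℕ) (hpos : ∀ ν, 0 < L ν) {d : ℕ} (hd : 0 < d) :
    ∑ ν, (if L ν ∣ d then L ν else 0) = ∑ e ∈ d.divisors, e * cnt L e := by
  classical
  rw [← Finset.sum_filter]
  rw [← Finset.sum_fiberwise_of_maps_to (g := L) (t := d.divisors)
    (fun ν hν => by
      simp only [Finset.mem_filter] at hν
      exact Nat.mem_divisors.mpr ⟨hν.2, by omega⟩)]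
  refine Finset.sum_congr rfl (fun e he => ?_)
  have hed : e ∣ d := (Nat.mem_divisors.mp he).1
  have hfib : (Finset.univ.filter (fun ν => L ν ∣ d)).filter (fun ν => L ν = e)
      = Finset.univ.filter (fun ν => L ν = e) := by
    ext ν
    simp only [Finset.mem_filter, Finset.mem_univ, true_and]
    constructor
    · rintro ⟨_, h⟩; exact h
    · rintro rfl; exact ⟨hed, rfl⟩
  rw [hfib]
  rw [Finset.sum_congr rfl (fun ν hν => by
    simp only [Finset.mem_filter] at hν
    exact hν.2)]
  rw [Finset.sum_const, cnt, smul_eq_mul, mul_comm]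

lemma cnt_zero {μ : ℕ} (L : Fin μ → ℕ) (hpos : ∀ ν, 0 < L ν) : cnt L 0 = 0 := by
  rw [cnt, Finset.card_eq_zero, Finset.filter_eq_empty_iff]
  intro ν _
  have := hpos ν
  omega

lemma cnt_eq_of_S_eq {μ μ' : ℕ} (L : Fin μ → ℕ) (L' : Fin μ' → ℕ)
    (hpos : ∀ ν, 0 < L ν) (hpos' : ∀ ν, 0 < L' ν)
    (hS : ∀ d, 0 < d → ∑ ν, (if L ν ∣ d then L ν else 0)
      = ∑ ν, (if L' ν ∣ d then L' ν else 0)) :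
    ∀ d, cnt L d = cnt L' d := by
  intro d
  induction d using Nat.strong_induction_on with
  | _ d ih =>
      rcases Nat.eq_zero_or_pos d with rfl | hd
      · rw [cnt_zero L hpos, cnt_zero L' hpos']
      have hdiv : ∑ e ∈ d.divisors, e * cnt L e = ∑ e ∈ d.divisors, e * cnt L' e := by
        rw [← S_eq L hpos hd, ← S_eq L' hpos' hd, hS d hd]
      rw [← Nat.cons_self_properDivisors (by omega : d ≠ 0), Finset.sum_cons,
        Finset.sum_cons] at hdiv
      have hprop : ∑ e ∈ d.properDivisors, e * cnt L e
          = ∑ e ∈ d.properDivisors, e * cnt L' e := by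
        refine Finset.sum_congr rfl (fun e he => ?_)
        rw [ih e (Nat.mem_properDivisors.mp he).2]
      rw [hprop] at hdiv
      have : d * cnt L d = d * cnt L' d := by omega
      exact Nat.eq_of_mul_eq_mul_left hd this

lemma cum_eq {μ : ℕ} (L : Fin μ → ℕ) (v : ℕ) :
    (Finset.univ.filter fun ν => L ν ≤ v).card = ∑ e ∈ Finset.range (v+1), cnt L e := by
  classical
  rw [Finset.card_eq_sum_card_fiberwise (f := L) (t := Finset.range (v+1))
    (fun ν hν => by
      simp only [Finset.mem_coe, Finset.mem_filter] at hν
      simp only [Finset.mem_coe, Finset.mem_range]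
      omega)]
  refine Finset.sum_congr rfl (fun e he => ?_)
  simp only [Finset.mem_range] at he
  congr 1
  ext ν
  simp only [Finset.mem_filter, Finset.mem_univ, true_and]
  constructor
  · rintro ⟨_, h⟩; exact h
  · rintro rfl; exact ⟨by omega, rfl⟩

lemma not_lt_aux {μ μ' : ℕ} (L : Fin μ → ℕ) (L' : Fin μ' → ℕ)
    (hmono : Monotone L) (hmono' : Monotone L')
    (hcum : ∀ v, (Finset.univ.filter fun ν => L ν ≤ v).card
      = (Finset.univ.filter fun ν' => L' ν' ≤ v).card)
    (i : ℕ) (h1 : i < μ) (h2 : i < μ') : ¬ (L ⟨i, h1⟩ < L' ⟨i, h2⟩) := by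
  classical
  intro hlt
  set v := L ⟨i, h1⟩ with hv
  have hge : i + 1 ≤ (Finset.univ.filter fun ν => L ν ≤ v).card := by
    have hmap : ∀ j ∈ Finset.range (i+1),
        (⟨min j i, by omega⟩ : Fin μ) ∈ (Finset.univ.filter fun ν => L ν ≤ v) := by
      intro j hj
      simp only [Finset.mem_filter, Finset.mem_univ, true_and]
      exact hmono (Fin.mk_le_mk.mpr (by omega))
    have := Finset.card_le_card_of_injOn (fun j => (⟨min j i, by omega⟩ : Fin μ))
      hmap (by
        intro a ha b hb hab
        simp only [Finset.mem_coe, Finset.mem_range] at ha hb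
        have := congrArg Fin.val hab
        simp only at this
        omega)
    simpa using this
  have hle : (Finset.univ.filter fun ν' => L' ν' ≤ v).card ≤ i := by
    have hmap : ∀ ν' ∈ (Finset.univ.filter fun ν' => L' ν' ≤ v),
        ν'.val ∈ Finset.range i := by
      intro ν' hν'
      simp only [Finset.mem_filter, Finset.mem_univ, true_and] at hν'
      simp only [Finset.mem_range]
      by_contra hcon
      push_neg at hcon
      have : L' ⟨i, h2⟩ ≤ L' ν' := hmono' (by rw [Fin.le_def]; simpa using hcon)
      omega
    have := Finset.card_le_card_of_injOn (fun ν' : Fin μ' => ν'.val) hmap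
      (fun a _ b _ hab => Fin.ext hab)
    simpa using this
  have := hcum v
  omega

/-- Let `ℓ ≥ 2` and let `ℓ⃗`, `ℓ⃗'` be partitions of `ℓ+1`, each into an odd
number of positive parts, with associated elements `n_{ℓ⃗}`, `n_{ℓ⃗'}` of `SO_{2ℓ+2}(ℂ)`.
If some `h ∈ SO_{2ℓ+2}(ℂ)` satisfies `n_{ℓ⃗'} = h · n_{ℓ⃗} · θ(h)⁻¹` with `θ(g) = J g J`,
then `ℓ⃗ = ℓ⃗'`. -/
theorem stmt19 (ℓ : ℕ) (hℓ : 2 ≤ ℓ) (μ μ' : ℕ) (hμ : Odd μ) (hμ' : Odd μ')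
    (L : Fin μ → ℕ) (L' : Fin μ' → ℕ)
    (hpos : ∀ ν, 0 < L ν) (hmono : Monotone L) (hsum : ∑ ν, L ν = ℓ + 1)
    (hpos' : ∀ ν, 0 < L' ν) (hmono' : Monotone L') (hsum' : ∑ ν, L' ν = ℓ + 1)
    (h : Matrix (Fin (2*ℓ+2)) (Fin (2*ℓ+2)) ℂ)
    (hdet : h.det = 1) (hSO : h = (K ℓ * h⁻¹ * K ℓ)ᵀ)
    (hconj : n ℓ μ' L' = h * n ℓ μ L * (J ℓ * h * J ℓ)⁻¹) :
    μ = μ' ∧ ∀ (ν : ℕ) (h1 : ν < μ) (h2 : ν < μ'), L ⟨ν, h1⟩ = L' ⟨ν, h2⟩ := by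
  classical
  have hμ0 : 0 < μ := hμ.pos
  have hμ0' : 0 < μ' := hμ'.pos
  have hJJ := J_mul_J ℓ
  have hdu : IsUnit h.det := by rw [hdet]; exact isUnit_one
  have hmul : h * h⁻¹ = 1 := Matrix.mul_nonsing_inv h hdu
  have hJinv : (J ℓ * h * J ℓ)⁻¹ = J ℓ * h⁻¹ * J ℓ := by
    apply Matrix.inv_eq_right_inv
    calc J ℓ * h * J ℓ * (J ℓ * h⁻¹ * J ℓ)
        = J ℓ * (h * ((J ℓ * J ℓ) * (h⁻¹ * J ℓ))) := by simp only [mul_assoc]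
      _ = 1 := by rw [hJJ, one_mul, ← mul_assoc h h⁻¹, hmul, one_mul, hJJ]
  have hBA : n ℓ μ' L' * J ℓ = h * (n ℓ μ L * J ℓ) * h⁻¹ := by
    rw [hconj, hJinv]
    calc h * n ℓ μ L * (J ℓ * h⁻¹ * J ℓ) * J ℓ
        = h * (n ℓ μ L * (J ℓ * (h⁻¹ * (J ℓ * J ℓ)))) := by simp only [mul_assoc]
      _ = h * (n ℓ μ L * J ℓ) * h⁻¹ := by rw [hJJ, mul_one]; simp only [mul_assoc]
  have hσ' : (sigmaP ℓ μ' L').permMatrix ℂ = h * (sigmaP ℓ μ L).permMatrix ℂ * h⁻¹ := by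
    rw [← n_eq ℓ hpos (fun ν => Pv_le ℓ L hsum ν),
      ← n_eq ℓ hpos' (fun ν => Pv_le ℓ L' hsum' ν)]
    exact hBA
  have htrace : ∀ m : ℕ,
      ((Finset.univ.filter fun x : Fin (2*ℓ+2) => (sigmaP ℓ μ' L' ^ m) x = x).card : ℂ)
        = ((Finset.univ.filter fun x : Fin (2*ℓ+2) => (sigmaP ℓ μ L ^ m) x = x).card : ℂ) := by
    intro m
    rw [← trace_permMatrix_fix, ← trace_permMatrix_fix, ← permMatrix_pow, ← permMatrix_pow]
    exact trace_pow_conj _ _ h hdu hσ' m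
  have hfixnat : ∀ m, (∑ ν, if 2 * L' ν ∣ m then 2 * L' ν else 0)
      = ∑ ν, if 2 * L ν ∣ m then 2 * L ν else 0 := by
    intro m
    have hm := htrace m
    rw [Nat.cast_inj] at hm
    rw [← fix_count ℓ L' hsum' hpos' hμ0' m, ← fix_count ℓ L hsum hpos hμ0 m, hm]
  have hSd : ∀ d, 0 < d → ∑ ν, (if L ν ∣ d then L ν else 0)
      = ∑ ν, (if L' ν ∣ d then L' ν else 0) := by
    intro d hd
    have h2 := (hfixnat (2*d)).symm
    have e1 : ∀ {μ₀ : ℕ} (M : Fin μ₀ → ℕ), (∑ ν, if 2 * M ν ∣ 2*d then 2 * M ν else 0)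
        = 2 * ∑ ν, (if M ν ∣ d then M ν else 0) := by
      intro μ₀ M
      rw [Finset.mul_sum]
      refine Finset.sum_congr rfl (fun ν _ => ?_)
      have hiff : (2 * M ν ∣ 2 * d) ↔ (M ν ∣ d) :=
        mul_dvd_mul_iff_left (two_ne_zero)
      split_ifs with ha hb hb
      · rfl
      · exact absurd (hiff.mp ha) hb
      · exact absurd (hiff.mpr hb) ha
      · simp
    rw [e1 L, e1 L'] at h2
    omega
  have hcnt := cnt_eq_of_S_eq L L' hpos hpos' hSd
  have hcum : ∀ v, (Finset.univ.filter fun ν => L ν ≤ v).card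
      = (Finset.univ.filter fun ν' => L' ν' ≤ v).card := by
    intro v
    rw [cum_eq, cum_eq]
    exact Finset.sum_congr rfl (fun e _ => hcnt e)
  constructor
  · have hL : ∀ ν, L ν ≤ ℓ + 1 := fun ν => by
      rw [← hsum]
      exact Finset.single_le_sum (fun j _ => Nat.zero_le _) (Finset.mem_univ ν)
    have h1 : (Finset.univ.filter fun ν : Fin μ => L ν ≤ ℓ+1) = Finset.univ := by
      rw [Finset.filter_eq_self]; exact fun ν _ => hL ν
    have hL' : ∀ ν, L' ν ≤ ℓ + 1 := fun ν => by
      rw [← hsum']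
      exact Finset.single_le_sum (fun j _ => Nat.zero_le _) (Finset.mem_univ ν)
    have h2 : (Finset.univ.filter fun ν : Fin μ' => L' ν ≤ ℓ+1) = Finset.univ := by
      rw [Finset.filter_eq_self]; exact fun ν _ => hL' ν
    have h3 := hcum (ℓ+1)
    rw [h1, h2] at h3
    simpa [Finset.card_univ] using h3
  · intro i h1 h2
    have hnot1 := not_lt_aux L L' hmono hmono' hcum i h1 h2
    have hnot2 := not_lt_aux L' L hmono' hmono (fun v => (hcum v).symm) i h2 h1
    omega

end Stmt19
end
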